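/- There is an absolute constant C > 0 such that, uniformly for all x ≥ 2 and all coprime positive integers e, f with e, f ≤ x, one has Σ 1/(ab) · ∏_{p | ab(ae−bf)} (1 + 1/p) ≤ C·(log x)^2, where the sum is over pairs of positive integers a, b ≤ x with gcd(ae, bf) = 1 and ae ≠ bf, and the product runs over the primes p dividing ab(ae−bf). -/

import Mathlib

open Filter Real Finset

private lemma harm_le {n : ℕ} {y : ℝ} (hn : (n : ℝ) ≤ y) (hy : 1 ≤ y) :
    ∑ i ∈ Finset.Icc 1 n, (i : ℝ)⁻¹ ≤ 1 + Real.log y := by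
  have h1 : ∑ i ∈ Finset.Icc 1 n, (i : ℝ)⁻¹ = ((harmonic n : ℚ) : ℝ) := by
    rw [harmonic_eq_sum_Icc]
    push_cast
    rfl
  rw [h1]
  have h2 := harmonic_le_one_add_log n
  have h3 : Real.log n ≤ Real.log y := by
    rcases Nat.eq_zero_or_pos n with h | h
    · simp [h]
      exact Real.log_nonneg hy
    · apply Real.log_le_log (by positivity) hn
  linarith

private lemma sq_sum_le (n : ℕ) : ∑ i ∈ Finset.Icc 1 n, ((i : ℝ) * i)⁻¹ ≤ 2 := by
  have key : ∀ m : ℕ, ∑ i ∈ Finset.Icc 1 m, ((i : ℝ) * i)⁻¹ ≤ 2 - 2 / (m + 1) := by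
    intro m
    induction m with
    | zero => simp
    | succ k ih =>
      rw [Finset.sum_Icc_succ_top (by omega)]
      have hk : (0:ℝ) < (k:ℝ) + 1 := by positivity
      have hk2 : (0:ℝ) < (k:ℝ) + 2 := by positivity
      have : (((k+1 : ℕ) : ℝ) * ((k+1 : ℕ) : ℝ))⁻¹ ≤ 2 / (k+1) - 2 / ((k:ℝ)+2) := by
        push_cast
        rw [div_sub_div _ _ (ne_of_gt hk) (ne_of_gt hk2), inv_eq_one_div,
          div_le_div_iff₀ (by positivity) (by positivity)]
        ring_nf
        nlinarith [sq_nonneg ((k:ℝ))]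
      push_cast at this ⊢
      have h4 : ((k:ℝ)+1+1) = (k:ℝ)+2 := by ring
      rw [h4]
      linarith [ih]
  have := key n
  have : (0:ℝ) < (n:ℝ) + 1 := by positivity
  have h2 : (0:ℝ) ≤ 2 / ((n:ℝ)+1) := by positivity
  linarith [key n]

private lemma prod_union_le {s t : Finset ℕ} {f : ℕ → ℝ} (hf : ∀ p, 1 ≤ f p) :
    ∏ p ∈ s ∪ t, f p ≤ (∏ p ∈ s, f p) * ∏ p ∈ t, f p := by
  have h0 : ∀ (u : Finset ℕ), (0:ℝ) ≤ ∏ p ∈ u, f p := fun u =>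
    Finset.prod_nonneg (fun p _ => le_trans zero_le_one (hf p))
  rw [← Finset.union_sdiff_self_eq_union, Finset.prod_union Finset.disjoint_sdiff]
  have hone : ∀ u : Finset ℕ, (1:ℝ) ≤ ∏ p ∈ u, f p := by
    intro u
    induction u using Finset.induction with
    | empty => simp
    | @insert a u ha ih =>
      rw [Finset.prod_insert ha]
      calc (1:ℝ) = 1 * 1 := (mul_one 1).symm
        _ ≤ f a * ∏ p ∈ u, f p :=
          mul_le_mul (hf a) ih zero_le_one (le_trans zero_le_one (hf a))
  have h1 : ∏ p ∈ t \ s, f p ≤ ∏ p ∈ t, f p := by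
    calc ∏ p ∈ t \ s, f p = (∏ p ∈ t \ s, f p) * 1 := (mul_one _).symm
      _ ≤ (∏ p ∈ t \ s, f p) * ∏ p ∈ t ∩ s, f p :=
          mul_le_mul_of_nonneg_left (hone _) (h0 _)
      _ = ∏ p ∈ t, f p := by
          rw [← Finset.prod_union (Finset.disjoint_sdiff_inter t s),
            Finset.sdiff_union_inter]
  exact mul_le_mul_of_nonneg_left h1 (h0 s)

private lemma G_le {n N : ℕ} (hn : n ≠ 0) (hN : n ≤ N) :
    ∏ p ∈ n.primeFactors, (1 + (p : ℝ)⁻¹) ≤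
      ∑ d ∈ Finset.Icc 1 N, (if d ∣ n then (d : ℝ)⁻¹ else 0) := by
  have h1 : ∏ p ∈ n.primeFactors, (1 + (p : ℝ)⁻¹)
      = ∑ t ∈ n.primeFactors.powerset, ((∏ p ∈ t, p : ℕ) : ℝ)⁻¹ := by
    simp_rw [add_comm (1:ℝ)]
    rw [Finset.prod_add]
    apply Finset.sum_congr rfl
    intro t _
    rw [Finset.prod_const_one, mul_one, Nat.cast_prod, ← Finset.prod_inv_distrib]
  rw [h1]
  have hdvd : ∀ t ∈ n.primeFactors.powerset, (∏ p ∈ t, p) ∣ n := by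
    intro t ht
    rw [Finset.mem_powerset] at ht
    exact Finset.prod_primes_dvd n
      (fun p hp => (Nat.prime_of_mem_primeFactors (ht hp)).prime)
      (fun p hp => Nat.dvd_of_mem_primeFactors (ht hp))
  have hinj : ∀ t₁ ∈ n.primeFactors.powerset, ∀ t₂ ∈ n.primeFactors.powerset,
      (∏ p ∈ t₁, p) = (∏ p ∈ t₂, p) → t₁ = t₂ := by
    intro t₁ h₁ t₂ h₂ h
    rw [Finset.mem_powerset] at h₁ h₂
    have e₁ := Nat.primeFactors_prod (fun p hp => Nat.prime_of_mem_primeFactors (h₁ hp))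
    have e₂ := Nat.primeFactors_prod (fun p hp => Nat.prime_of_mem_primeFactors (h₂ hp))
    rw [← e₁, ← e₂, h]
  calc ∑ t ∈ n.primeFactors.powerset, ((∏ p ∈ t, p : ℕ) : ℝ)⁻¹
      = ∑ t ∈ n.primeFactors.powerset,
          (if (∏ p ∈ t, p) ∣ n then ((∏ p ∈ t, p : ℕ) : ℝ)⁻¹ else 0) := by
        apply Finset.sum_congr rfl
        intro t ht
        rw [if_pos (hdvd t ht)]
    _ = ∑ d ∈ n.primeFactors.powerset.image (fun t => ∏ p ∈ t, p),
          (if d ∣ n then (d : ℝ)⁻¹ else 0) := by rw [Finset.sum_image hinj]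
    _ ≤ ∑ d ∈ Finset.Icc 1 N, (if d ∣ n then (d : ℝ)⁻¹ else 0) := by
        apply Finset.sum_le_sum_of_subset_of_nonneg
        · intro d hd
          rw [Finset.mem_image] at hd
          obtain ⟨t, ht, rfl⟩ := hd
          have h := hdvd t ht
          rw [Finset.mem_Icc]
          exact ⟨Nat.one_le_iff_ne_zero.2 (fun h0 => hn (by simpa [h0] using h)),
            le_trans (Nat.le_of_dvd (Nat.pos_of_ne_zero hn) h) hN⟩
        · intro d _ _
          split <;> positivity

private lemma ap_sum {T : Finset ℕ} {n r m : ℕ} {y : ℝ}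
    (hT : T ⊆ Finset.Icc 1 n) (hr : 0 < r) (hm : 0 < m)
    (hdr : ∀ b ∈ T, r ∣ b)
    (hcong : ∀ b₁ ∈ T, ∀ b₂ ∈ T, (m : ℤ) ∣ (b₁ : ℤ) - (b₂ : ℤ))
    (hny : (n : ℝ) ≤ y) (hy : 1 ≤ y) :
    ∑ b ∈ T, (b : ℝ)⁻¹ ≤ (r : ℝ)⁻¹ + (m : ℝ)⁻¹ * (1 + Real.log y) := by
  have hlog : (0:ℝ) ≤ Real.log y := Real.log_nonneg hy
  rcases T.eq_empty_or_nonempty with rfl | hne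
  · simp
    positivity
  set b₀ := T.min' hne with hb₀
  have hb₀T : b₀ ∈ T := T.min'_mem hne
  have hb₀1 : 1 ≤ b₀ := (Finset.mem_Icc.1 (hT hb₀T)).1
  have h1 : (b₀:ℝ)⁻¹ ≤ (r:ℝ)⁻¹ := by
    have hrb : r ≤ b₀ := Nat.le_of_dvd (by omega) (hdr _ hb₀T)
    apply inv_anti₀ (by exact_mod_cast hr) (by exact_mod_cast hrb)
  -- facts about elements of the erase
  have hfacts : ∀ b ∈ T.erase b₀, m ∣ b - b₀ ∧ b₀ < b := by
    intro b hb
    have hbT : b ∈ T := Finset.mem_of_mem_erase hb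
    have hlt : b₀ < b :=
      lt_of_le_of_ne (T.min'_le b hbT) (Ne.symm (Finset.ne_of_mem_erase hb))
    have hd : (m:ℤ) ∣ (b:ℤ) - (b₀:ℤ) := hcong b hbT b₀ hb₀T
    constructor
    · have : ((b - b₀ : ℕ) : ℤ) = (b:ℤ) - (b₀:ℤ) := by
        push_cast [Nat.cast_sub (le_of_lt hlt)]; ring
      rw [← Int.natCast_dvd_natCast]
      rw [this]; exact hd
    · exact hlt
  set i : ℕ → ℕ := fun b => (b - b₀) / m with hi
  have hik : ∀ b ∈ T.erase b₀, i b * m = b - b₀ ∧ 1 ≤ i b ∧ i b ≤ n := by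
    intro b hb
    obtain ⟨hd, hlt⟩ := hfacts b hb
    have hbn : b ≤ n := (Finset.mem_Icc.1 (hT (Finset.mem_of_mem_erase hb))).2
    have h2 : i b * m = b - b₀ := Nat.div_mul_cancel hd
    refine ⟨h2, ?_, ?_⟩
    · rcases Nat.eq_zero_or_pos (i b) with h | h
      · rw [h, zero_mul] at h2; omega
      · exact h
    · have : i b ≤ i b * m := Nat.le_mul_of_pos_right _ hm
      omega
  have key : ∑ b ∈ T.erase b₀, (b:ℝ)⁻¹ ≤ (m:ℝ)⁻¹ * (1 + Real.log y) := by
    have hpt : ∀ b ∈ T.erase b₀, (b:ℝ)⁻¹ ≤ (m:ℝ)⁻¹ * ((i b : ℝ))⁻¹ := by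
      intro b hb
      obtain ⟨h2, h3, _⟩ := hik b hb
      obtain ⟨_, hlt⟩ := hfacts b hb
      have hbpos : 0 < b := by omega
      have : ((i b * m : ℕ) : ℝ)⁻¹ = (m:ℝ)⁻¹ * (i b : ℝ)⁻¹ := by
        push_cast; rw [mul_inv]; ring
      rw [← this, h2]
      apply inv_anti₀
      · have : 0 < b - b₀ := by omega
        exact_mod_cast this
      · exact_mod_cast Nat.sub_le b b₀
    calc ∑ b ∈ T.erase b₀, (b:ℝ)⁻¹ ≤ ∑ b ∈ T.erase b₀, (m:ℝ)⁻¹ * ((i b : ℝ))⁻¹ :=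
          Finset.sum_le_sum hpt
      _ = ∑ k ∈ (T.erase b₀).image i, (m:ℝ)⁻¹ * (k : ℝ)⁻¹ := by
          rw [Finset.sum_image]
          intro b₁ h₁ b₂ h₂ h
          obtain ⟨e₁, _, _⟩ := hik b₁ h₁
          obtain ⟨e₂, _, _⟩ := hik b₂ h₂
          obtain ⟨_, l₁⟩ := hfacts b₁ h₁
          obtain ⟨_, l₂⟩ := hfacts b₂ h₂
          have : b₁ - b₀ = b₂ - b₀ := by rw [← e₁, ← e₂, h]
          omega
      _ ≤ ∑ k ∈ Finset.Icc 1 n, (m:ℝ)⁻¹ * (k : ℝ)⁻¹ := by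
          apply Finset.sum_le_sum_of_subset_of_nonneg
          · intro k hk
            rw [Finset.mem_image] at hk
            obtain ⟨b, hb, rfl⟩ := hk
            obtain ⟨_, h3, h4⟩ := hik b hb
            exact Finset.mem_Icc.2 ⟨h3, h4⟩
          · intro k _ _; positivity
      _ = (m:ℝ)⁻¹ * ∑ k ∈ Finset.Icc 1 n, (k : ℝ)⁻¹ := by rw [Finset.mul_sum]
      _ ≤ (m:ℝ)⁻¹ * (1 + Real.log y) := by
          apply mul_le_mul_of_nonneg_left (harm_le hny hy) (by positivity)
  calc ∑ b ∈ T, (b:ℝ)⁻¹ = ∑ b ∈ T.erase b₀, (b:ℝ)⁻¹ + (b₀:ℝ)⁻¹ :=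
        (Finset.sum_erase_add T _ hb₀T).symm
    _ ≤ (m:ℝ)⁻¹ * (1 + Real.log y) + (r:ℝ)⁻¹ := add_le_add key h1
    _ = (r:ℝ)⁻¹ + (m:ℝ)⁻¹ * (1 + Real.log y) := by ring

private lemma inner_bound {x : ℝ} (hx : 2 ≤ x) {e f a : ℕ}
    (hen : e ≤ ⌊x⌋₊) (hfn : f ≤ ⌊x⌋₊) (ha : a ∈ Finset.Icc 1 ⌊x⌋₊) :
    ∑ b ∈ Finset.Icc 1 ⌊x⌋₊,
      (if Nat.gcd (a * e) (b * f) = 1 ∧ a * e ≠ b * f then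
        (b : ℝ)⁻¹ * (∏ p ∈ b.primeFactors, (1 + (p : ℝ)⁻¹)) *
          ∏ p ∈ (((a * e : ℤ) - (b * f : ℤ)).natAbs).primeFactors, (1 + (p : ℝ)⁻¹)
      else 0)
    ≤ 8 * (1 + Real.log x) := by
  classical
  set n := ⌊x⌋₊ with hn
  rw [Finset.mem_Icc] at ha
  have hx1 : (1:ℝ) ≤ x := by linarith
  have hnx : (n:ℝ) ≤ x := Nat.floor_le (by linarith)
  have hL : 0 ≤ Real.log x := Real.log_nonneg hx1
  set L := Real.log x with hLdef
  set N2 := n * n with hN2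
  set cond : ℕ → Prop := fun b => Nat.gcd (a * e) (b * f) = 1 ∧ a * e ≠ b * f with hcond
  set mf : ℕ → ℕ := fun b => ((a * e : ℤ) - (b * f : ℤ)).natAbs with hmf
  have hrwz : ∀ b : ℕ, (a * e : ℤ) - (b * f : ℤ) = ((a*e : ℕ) : ℤ) - ((b*f : ℕ) : ℤ) := by
    intro b; push_cast; ring
  have hm_le : ∀ b ∈ Finset.Icc 1 n, mf b ≤ N2 := by
    intro b hb
    rw [Finset.mem_Icc] at hb
    have h1 : a*e ≤ n*n := Nat.mul_le_mul ha.2 hen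
    have h2 : b*f ≤ n*n := Nat.mul_le_mul hb.2 hfn
    simp only [hmf]
    rw [hrwz b]
    omega
  have hm_ne : ∀ b : ℕ, cond b → mf b ≠ 0 := by
    intro b hc
    have hne : a*e ≠ b*f := hc.2
    simp only [hmf]
    rw [hrwz b]
    omega
  -- Step A: pointwise bound
  have stepA : ∀ b ∈ Finset.Icc 1 n,
      (if cond b then
        (b : ℝ)⁻¹ * (∏ p ∈ b.primeFactors, (1 + (p : ℝ)⁻¹)) *
          ∏ p ∈ (mf b).primeFactors, (1 + (p : ℝ)⁻¹) else 0)
      ≤ ∑ d₂ ∈ Finset.Icc 1 n, ∑ d₃ ∈ Finset.Icc 1 N2,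
          (if cond b ∧ d₂ ∣ b ∧ d₃ ∣ mf b then (b:ℝ)⁻¹ * (d₂:ℝ)⁻¹ * (d₃:ℝ)⁻¹ else 0) := by
    intro b hb
    rw [Finset.mem_Icc] at hb
    by_cases hc : cond b
    · rw [if_pos hc]
      have hGb := G_le (n := b) (N := n) (by omega) hb.2
      have hGm := G_le (n := mf b) (N := N2) (hm_ne b hc) (hm_le b (Finset.mem_Icc.2 hb))
      have hS2 : (0:ℝ) ≤ ∑ d ∈ Finset.Icc 1 n, (if d ∣ b then (d : ℝ)⁻¹ else 0) := by
        apply Finset.sum_nonneg; intro d _; split <;> positivity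
      have hGb0 : (0:ℝ) ≤ ∏ p ∈ b.primeFactors, (1 + (p : ℝ)⁻¹) := by
        apply Finset.prod_nonneg; intro p _; positivity
      have hGm0 : (0:ℝ) ≤ ∏ p ∈ (mf b).primeFactors, (1 + (p : ℝ)⁻¹) := by
        apply Finset.prod_nonneg; intro p _; positivity
      have hb0 : (0:ℝ) ≤ (b:ℝ)⁻¹ := by positivity
      calc (b : ℝ)⁻¹ * (∏ p ∈ b.primeFactors, (1 + (p : ℝ)⁻¹)) *
              ∏ p ∈ (mf b).primeFactors, (1 + (p : ℝ)⁻¹)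
          ≤ ((b : ℝ)⁻¹ * ∑ d ∈ Finset.Icc 1 n, (if d ∣ b then (d : ℝ)⁻¹ else 0)) *
              ∑ d ∈ Finset.Icc 1 N2, (if d ∣ mf b then (d : ℝ)⁻¹ else 0) := by
            apply mul_le_mul (mul_le_mul_of_nonneg_left hGb hb0) hGm hGm0
            positivity
        _ = ∑ d₂ ∈ Finset.Icc 1 n, ∑ d₃ ∈ Finset.Icc 1 N2,
              (if cond b ∧ d₂ ∣ b ∧ d₃ ∣ mf b then (b:ℝ)⁻¹ * (d₂:ℝ)⁻¹ * (d₃:ℝ)⁻¹ else 0) := by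
            simp only [Finset.mul_sum, Finset.sum_mul]
            rw [Finset.sum_comm]
            apply Finset.sum_congr rfl
            intro d₂ _
            apply Finset.sum_congr rfl
            intro d₃ _
            by_cases h₂ : d₂ ∣ b
            · by_cases h₃ : d₃ ∣ mf b
              · rw [if_pos h₂, if_pos h₃, if_pos (show cond b ∧ d₂ ∣ b ∧ d₃ ∣ mf b from ⟨hc, h₂, h₃⟩)]
              · rw [if_pos h₂, if_neg h₃, if_neg (by tauto)]; ring
            · by_cases h₃ : d₃ ∣ mf b
              · rw [if_neg h₂, if_pos h₃, if_neg (by tauto)]; ring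
              · rw [if_neg h₂, if_neg h₃, if_neg (by tauto)]; ring
    · rw [if_neg hc]
      apply Finset.sum_nonneg; intro d₂ _
      apply Finset.sum_nonneg; intro d₃ _
      split
      · positivity
      · exact le_rfl
  -- Step B: sum and swap
  have hN2x : ((N2:ℕ):ℝ) ≤ x^2 := by
    have : ((N2:ℕ):ℝ) = (n:ℝ) * n := by rw [hN2]; push_cast; ring
    rw [this, sq]
    exact mul_le_mul hnx hnx (by positivity) (by linarith)
  have hx2 : (1:ℝ) ≤ x^2 := by nlinarith
  have hd3sum : ∑ d₃ ∈ Finset.Icc 1 N2, (d₃:ℝ)⁻¹ ≤ 2 * (1 + L) := by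
    have h := harm_le hN2x hx2
    rw [Real.log_pow] at h
    push_cast at h
    simp only [hLdef]
    linarith
  calc ∑ b ∈ Finset.Icc 1 n,
        (if cond b then
          (b : ℝ)⁻¹ * (∏ p ∈ b.primeFactors, (1 + (p : ℝ)⁻¹)) *
            ∏ p ∈ (mf b).primeFactors, (1 + (p : ℝ)⁻¹) else 0)
      ≤ ∑ b ∈ Finset.Icc 1 n, ∑ d₂ ∈ Finset.Icc 1 n, ∑ d₃ ∈ Finset.Icc 1 N2,
          (if cond b ∧ d₂ ∣ b ∧ d₃ ∣ mf b then (b:ℝ)⁻¹ * (d₂:ℝ)⁻¹ * (d₃:ℝ)⁻¹ else 0) :=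
        Finset.sum_le_sum stepA
    _ = ∑ d₂ ∈ Finset.Icc 1 n, ∑ d₃ ∈ Finset.Icc 1 N2, ∑ b ∈ Finset.Icc 1 n,
          (if cond b ∧ d₂ ∣ b ∧ d₃ ∣ mf b then (b:ℝ)⁻¹ * (d₂:ℝ)⁻¹ * (d₃:ℝ)⁻¹ else 0) := by
        rw [Finset.sum_comm]
        exact Finset.sum_congr rfl (fun d₂ _ => Finset.sum_comm)
    _ ≤ ∑ d₂ ∈ Finset.Icc 1 n, ∑ d₃ ∈ Finset.Icc 1 N2,
          (((d₂:ℝ) * d₂)⁻¹ * (d₃:ℝ)⁻¹ + (1 + L) * (((d₂:ℝ) * d₂)⁻¹ * ((d₃:ℝ) * d₃)⁻¹)) := by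
        apply Finset.sum_le_sum
        intro d₂ hd₂
        apply Finset.sum_le_sum
        intro d₃ hd₃
        rw [Finset.mem_Icc] at hd₂ hd₃
        have hd₂1 : 0 < d₂ := hd₂.1
        have hd₃1 : 0 < d₃ := hd₃.1
        set T := (Finset.Icc 1 n).filter (fun b => cond b ∧ d₂ ∣ b ∧ d₃ ∣ mf b) with hT
        have hmemT : ∀ b ∈ T, cond b ∧ d₂ ∣ b ∧ d₃ ∣ mf b :=
          fun b hb => (Finset.mem_filter.1 hb).2
        have hdvd_int : ∀ b ∈ T, (d₃:ℤ) ∣ ((a * e : ℤ) - (b * f : ℤ)) := by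
          intro b hb
          have h := (hmemT b hb).2.2
          have h1 : (d₃:ℤ) ∣ ((mf b : ℕ) : ℤ) := Int.natCast_dvd_natCast.2 h
          simp only [hmf] at h1
          exact Int.dvd_natAbs.1 h1
        -- coprimality of d₃ with f, and of d₂ with d₃, via the gcd condition
        have hkey : ∀ b ∈ T, ∀ g : ℕ, g ∣ d₃ → g ∣ b * f → g = 1 := by
          intro b hb g hgd hgbf
          have hz : (g:ℤ) ∣ ((a * e : ℤ) - (b * f : ℤ)) :=
            dvd_trans (Int.natCast_dvd_natCast.2 hgd) (hdvd_int b hb)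
          have hbf : (g:ℤ) ∣ ((b * f : ℕ) : ℤ) := Int.natCast_dvd_natCast.2 hgbf
          have hbf' : (g:ℤ) ∣ ((b : ℤ) * f) := by push_cast at hbf ⊢; exact hbf
          have hae : (g:ℤ) ∣ ((a * e : ℕ) : ℤ) := by
            have := dvd_add hz hbf'
            have h2 : (a * e : ℤ) - (b * f : ℤ) + (b:ℤ) * f = ((a*e : ℕ) : ℤ) := by
              push_cast; ring
            rwa [h2] at this
          have h3 : g ∣ a * e := Int.natCast_dvd_natCast.1 hae
          have h4 := Nat.dvd_gcd h3 hgbf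
          rw [(hmemT b hb).1.1] at h4
          exact Nat.dvd_one.1 h4
        have hap : ∑ b ∈ T, (b:ℝ)⁻¹
            ≤ (d₂:ℝ)⁻¹ + ((d₂ * d₃ : ℕ):ℝ)⁻¹ * (1 + Real.log x) := by
          apply ap_sum (Finset.filter_subset _ _) hd₂1 (Nat.mul_pos hd₂1 hd₃1) _ _ hnx hx1
          · intro b hb; exact (hmemT b hb).2.1
          · intro b₁ h₁ b₂ h₂
            -- d₃ coprime to f
            have hcop3f : Nat.Coprime d₃ f := by
              have := hkey b₁ h₁ (Nat.gcd d₃ f) (Nat.gcd_dvd_left _ _)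
                (Dvd.dvd.mul_left (Nat.gcd_dvd_right _ _) b₁)
              exact this
            have hz₁ := hdvd_int b₁ h₁
            have hz₂ := hdvd_int b₂ h₂
            have hsub : (d₃:ℤ) ∣ ((b₂:ℤ) - (b₁:ℤ)) * (f:ℤ) := by
              have h := dvd_sub hz₁ hz₂
              have h2 : (a * e : ℤ) - (b₁ * f : ℤ) - ((a * e : ℤ) - (b₂ * f : ℤ))
                  = ((b₂:ℤ) - (b₁:ℤ)) * (f:ℤ) := by push_cast; ring
              rwa [h2] at h
            have hd₃b : (d₃:ℤ) ∣ (b₁:ℤ) - (b₂:ℤ) := by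
              have h := (IsCoprime.dvd_of_dvd_mul_right
                (Nat.isCoprime_iff_coprime.2 hcop3f) hsub)
              exact (dvd_sub_comm).1 h
            have hd₂b : (d₂:ℤ) ∣ (b₁:ℤ) - (b₂:ℤ) :=
              dvd_sub (Int.natCast_dvd_natCast.2 (hmemT b₁ h₁).2.1)
                (Int.natCast_dvd_natCast.2 (hmemT b₂ h₂).2.1)
            have hcop23 : Nat.Coprime d₂ d₃ := by
              have hgb : Nat.gcd d₂ d₃ ∣ b₁ * f :=
                Dvd.dvd.mul_right (dvd_trans (Nat.gcd_dvd_left _ _) (hmemT b₁ h₁).2.1) f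
              exact hkey b₁ h₁ (Nat.gcd d₂ d₃) (Nat.gcd_dvd_right _ _) hgb
            have := IsCoprime.mul_dvd (Nat.isCoprime_iff_coprime.2 hcop23) hd₂b hd₃b
            have hcast : ((d₂ * d₃ : ℕ):ℤ) = (d₂:ℤ) * (d₃:ℤ) := by push_cast; ring
            rwa [← hcast] at this
        have hfac : ∑ b ∈ Finset.Icc 1 n,
              (if cond b ∧ d₂ ∣ b ∧ d₃ ∣ mf b then (b:ℝ)⁻¹ * (d₂:ℝ)⁻¹ * (d₃:ℝ)⁻¹ else 0)
            = (d₂:ℝ)⁻¹ * (d₃:ℝ)⁻¹ * ∑ b ∈ T, (b:ℝ)⁻¹ := by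
          rw [hT, Finset.mul_sum, ← Finset.sum_filter]
          apply Finset.sum_congr rfl
          intro b _; ring
        rw [hfac]
        have hnn : (0:ℝ) ≤ (d₂:ℝ)⁻¹ * (d₃:ℝ)⁻¹ := by positivity
        calc (d₂:ℝ)⁻¹ * (d₃:ℝ)⁻¹ * ∑ b ∈ T, (b:ℝ)⁻¹
            ≤ (d₂:ℝ)⁻¹ * (d₃:ℝ)⁻¹ * ((d₂:ℝ)⁻¹ + ((d₂ * d₃ : ℕ):ℝ)⁻¹ * (1 + Real.log x)) :=
              mul_le_mul_of_nonneg_left hap hnn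
          _ = ((d₂:ℝ) * d₂)⁻¹ * (d₃:ℝ)⁻¹ + (1 + L) * (((d₂:ℝ) * d₂)⁻¹ * ((d₃:ℝ) * d₃)⁻¹) := by
              push_cast
              rw [mul_inv, mul_inv, mul_inv]
              simp only [hLdef]
              ring
    _ = (∑ d₂ ∈ Finset.Icc 1 n, ((d₂:ℝ) * d₂)⁻¹) * (∑ d₃ ∈ Finset.Icc 1 N2, (d₃:ℝ)⁻¹)
        + (1 + L) * ((∑ d₂ ∈ Finset.Icc 1 n, ((d₂:ℝ) * d₂)⁻¹) *
            (∑ d₃ ∈ Finset.Icc 1 N2, ((d₃:ℝ) * d₃)⁻¹)) := by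
        rw [Finset.sum_mul_sum, Finset.sum_mul_sum, Finset.mul_sum, ← Finset.sum_add_distrib]
        apply Finset.sum_congr rfl
        intro d₂ _
        rw [Finset.mul_sum, ← Finset.sum_add_distrib]
    _ ≤ 2 * (2 * (1 + L)) + (1 + L) * (2 * 2) := by
        have s2 := sq_sum_le n
        have s3 := sq_sum_le N2
        have h2 : (0:ℝ) ≤ ∑ d₂ ∈ Finset.Icc 1 n, ((d₂:ℝ) * d₂)⁻¹ := by
          apply Finset.sum_nonneg; intro i _; positivity
        have h3 : (0:ℝ) ≤ ∑ d₃ ∈ Finset.Icc 1 N2, (d₃:ℝ)⁻¹ := by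
          apply Finset.sum_nonneg; intro i _; positivity
        have h4 : (0:ℝ) ≤ ∑ d₃ ∈ Finset.Icc 1 N2, ((d₃:ℝ) * d₃)⁻¹ := by
          apply Finset.sum_nonneg; intro i _; positivity
        have h5 : (0:ℝ) ≤ 1 + L := by linarith
        have h6 : (0:ℝ) ≤ 2 * (1+L) := by linarith
        apply add_le_add
        · apply mul_le_mul s2 hd3sum h3 (by norm_num)
        · apply mul_le_mul_of_nonneg_left _ h5
          apply mul_le_mul s2 s3 h4 (by norm_num)
    _ = 8 * (1 + L) := by ring

private lemma outer_bound {x : ℝ} (hx : 2 ≤ x) :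
    ∑ a ∈ Finset.Icc 1 ⌊x⌋₊, ((a:ℝ)⁻¹ * ∏ p ∈ a.primeFactors, (1 + (p:ℝ)⁻¹))
      ≤ 4 * (1 + Real.log x) := by
  set n := ⌊x⌋₊ with hn
  have hx1 : (1:ℝ) ≤ x := by linarith
  have hnx : (n:ℝ) ≤ x := Nat.floor_le (by linarith)
  have hL : 0 ≤ Real.log x := Real.log_nonneg hx1
  have step1 : ∀ a ∈ Finset.Icc 1 n, (a:ℝ)⁻¹ * ∏ p ∈ a.primeFactors, (1 + (p:ℝ)⁻¹)
      ≤ ∑ d ∈ Finset.Icc 1 n, (if d ∣ a then (a:ℝ)⁻¹ * (d:ℝ)⁻¹ else 0) := by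
    intro a ha
    rw [Finset.mem_Icc] at ha
    have hG := G_le (n := a) (N := n) (by omega) ha.2
    calc (a:ℝ)⁻¹ * ∏ p ∈ a.primeFactors, (1 + (p:ℝ)⁻¹)
        ≤ (a:ℝ)⁻¹ * ∑ d ∈ Finset.Icc 1 n, (if d ∣ a then (d:ℝ)⁻¹ else 0) :=
          mul_le_mul_of_nonneg_left hG (by positivity)
      _ = ∑ d ∈ Finset.Icc 1 n, (if d ∣ a then (a:ℝ)⁻¹ * (d:ℝ)⁻¹ else 0) := by
          rw [Finset.mul_sum]
          apply Finset.sum_congr rfl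
          intro d _
          split <;> simp
  calc ∑ a ∈ Finset.Icc 1 n, ((a:ℝ)⁻¹ * ∏ p ∈ a.primeFactors, (1 + (p:ℝ)⁻¹))
      ≤ ∑ a ∈ Finset.Icc 1 n, ∑ d ∈ Finset.Icc 1 n,
          (if d ∣ a then (a:ℝ)⁻¹ * (d:ℝ)⁻¹ else 0) := Finset.sum_le_sum step1
    _ = ∑ d ∈ Finset.Icc 1 n, ∑ a ∈ Finset.Icc 1 n,
          (if d ∣ a then (a:ℝ)⁻¹ * (d:ℝ)⁻¹ else 0) := Finset.sum_comm
    _ ≤ ∑ d ∈ Finset.Icc 1 n, ((d:ℝ) * d)⁻¹ * (2 + Real.log x) := by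
        apply Finset.sum_le_sum
        intro d hd
        rw [Finset.mem_Icc] at hd
        have hd1 : 0 < d := hd.1
        have hsum : ∑ a ∈ Finset.Icc 1 n, (if d ∣ a then (a:ℝ)⁻¹ * (d:ℝ)⁻¹ else 0)
            = (d:ℝ)⁻¹ * ∑ a ∈ (Finset.Icc 1 n).filter (fun a => d ∣ a), (a:ℝ)⁻¹ := by
          rw [Finset.mul_sum, ← Finset.sum_filter]
          apply Finset.sum_congr rfl
          intro a _; ring
        rw [hsum]
        have hap : ∑ a ∈ (Finset.Icc 1 n).filter (fun a => d ∣ a), (a:ℝ)⁻¹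
            ≤ (d:ℝ)⁻¹ + (d:ℝ)⁻¹ * (1 + Real.log x) := by
          apply ap_sum (Finset.filter_subset _ _) hd1 hd1 _ _ hnx hx1
          · intro b hb
            exact (Finset.mem_filter.1 hb).2
          · intro b₁ h₁ b₂ h₂
            have d₁ : d ∣ b₁ := (Finset.mem_filter.1 h₁).2
            have d₂ : d ∣ b₂ := (Finset.mem_filter.1 h₂).2
            exact dvd_sub (Int.natCast_dvd_natCast.2 d₁) (Int.natCast_dvd_natCast.2 d₂)
        calc (d:ℝ)⁻¹ * ∑ a ∈ (Finset.Icc 1 n).filter (fun a => d ∣ a), (a:ℝ)⁻¹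
            ≤ (d:ℝ)⁻¹ * ((d:ℝ)⁻¹ + (d:ℝ)⁻¹ * (1 + Real.log x)) :=
              mul_le_mul_of_nonneg_left hap (by positivity)
          _ = ((d:ℝ) * d)⁻¹ * (2 + Real.log x) := by
              rw [mul_inv]; ring
    _ = (∑ d ∈ Finset.Icc 1 n, ((d:ℝ) * d)⁻¹) * (2 + Real.log x) := by
        rw [Finset.sum_mul]
    _ ≤ 2 * (2 + Real.log x) := by
        apply mul_le_mul_of_nonneg_right (sq_sum_le n) (by linarith)
    _ ≤ 4 * (1 + Real.log x) := by linarith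

theorem abef_sum_bound :
    ∃ C : ℝ, C > 0 ∧ ∀ x : ℝ, x ≥ 2 → ∀ e f : ℕ, 0 < e → 0 < f →
      Nat.Coprime e f → (e : ℝ) ≤ x → (f : ℝ) ≤ x →
      ∑ a ∈ Finset.Icc 1 ⌊x⌋₊, ∑ b ∈ Finset.Icc 1 ⌊x⌋₊,
        (if Nat.gcd (a * e) (b * f) = 1 ∧ a * e ≠ b * f then
          (1 : ℝ) / (a * b) *
            ∏ p ∈ (a * b * ((a * e : ℤ) - (b * f : ℤ)).natAbs).primeFactors,
              (1 + (p : ℝ)⁻¹)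
        else 0)
        ≤ C * (Real.log x) ^ 2 := by
  classical
  refine ⟨288, by norm_num, ?_⟩
  intro x hx e f he hf _hcop hex hfx
  have hx' : (2:ℝ) ≤ x := hx
  set n := ⌊x⌋₊ with hn
  have hx1 : (1:ℝ) ≤ x := by linarith
  have hL : 0 ≤ Real.log x := Real.log_nonneg hx1
  set L := Real.log x with hLdef
  have hen : e ≤ n := Nat.le_floor hex
  have hfn : f ≤ n := Nat.le_floor hfx
  have hone : ∀ p : ℕ, (1:ℝ) ≤ 1 + (p:ℝ)⁻¹ := by
    intro p
    have : (0:ℝ) ≤ (p:ℝ)⁻¹ := by positivity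
    linarith
  -- pointwise bound and reduction to inner/outer sums
  have main : ∑ a ∈ Finset.Icc 1 n, ∑ b ∈ Finset.Icc 1 n,
        (if Nat.gcd (a * e) (b * f) = 1 ∧ a * e ≠ b * f then
          (1 : ℝ) / (a * b) *
            ∏ p ∈ (a * b * ((a * e : ℤ) - (b * f : ℤ)).natAbs).primeFactors,
              (1 + (p : ℝ)⁻¹)
        else 0)
      ≤ ∑ a ∈ Finset.Icc 1 n,
          (((a:ℝ)⁻¹ * ∏ p ∈ a.primeFactors, (1 + (p:ℝ)⁻¹)) * (8 * (1 + L))) := by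
    apply Finset.sum_le_sum
    intro a ha
    have haI := ha
    rw [Finset.mem_Icc] at ha
    have hGa0 : (0:ℝ) ≤ ∏ p ∈ a.primeFactors, (1 + (p:ℝ)⁻¹) :=
      Finset.prod_nonneg (fun p _ => le_trans zero_le_one (hone p))
    have haG0 : (0:ℝ) ≤ (a:ℝ)⁻¹ * ∏ p ∈ a.primeFactors, (1 + (p:ℝ)⁻¹) := by
      apply mul_nonneg (by positivity) hGa0
    have hpt : ∀ b ∈ Finset.Icc 1 n,
        (if Nat.gcd (a * e) (b * f) = 1 ∧ a * e ≠ b * f then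
          (1 : ℝ) / (a * b) *
            ∏ p ∈ (a * b * ((a * e : ℤ) - (b * f : ℤ)).natAbs).primeFactors,
              (1 + (p : ℝ)⁻¹)
        else 0)
        ≤ ((a:ℝ)⁻¹ * ∏ p ∈ a.primeFactors, (1 + (p:ℝ)⁻¹)) *
          (if Nat.gcd (a * e) (b * f) = 1 ∧ a * e ≠ b * f then
            (b : ℝ)⁻¹ * (∏ p ∈ b.primeFactors, (1 + (p : ℝ)⁻¹)) *
              ∏ p ∈ (((a * e : ℤ) - (b * f : ℤ)).natAbs).primeFactors, (1 + (p : ℝ)⁻¹)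
          else 0) := by
      intro b hb
      rw [Finset.mem_Icc] at hb
      by_cases hc : Nat.gcd (a * e) (b * f) = 1 ∧ a * e ≠ b * f
      · rw [if_pos hc, if_pos hc]
        set m := ((a * e : ℤ) - (b * f : ℤ)).natAbs with hm
        have hane : a ≠ 0 := by omega
        have hbne : b ≠ 0 := by omega
        have hmne : m ≠ 0 := by
          have hne : a*e ≠ b*f := hc.2
          have hrw : (a * e : ℤ) - (b * f : ℤ) = ((a*e : ℕ) : ℤ) - ((b*f : ℕ) : ℤ) := by
            push_cast; ring
          rw [hm, hrw]
          omega
        have hpf : (a * b * m).primeFactors =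
            (a.primeFactors ∪ b.primeFactors) ∪ m.primeFactors := by
          rw [Nat.primeFactors_mul (Nat.mul_ne_zero hane hbne) hmne,
            Nat.primeFactors_mul hane hbne]
        have hPle : ∏ p ∈ (a * b * m).primeFactors, (1 + (p:ℝ)⁻¹)
            ≤ (∏ p ∈ a.primeFactors, (1 + (p:ℝ)⁻¹)) *
              (∏ p ∈ b.primeFactors, (1 + (p:ℝ)⁻¹)) *
              ∏ p ∈ m.primeFactors, (1 + (p:ℝ)⁻¹) := by
          rw [hpf]
          calc ∏ p ∈ (a.primeFactors ∪ b.primeFactors) ∪ m.primeFactors, (1 + (p:ℝ)⁻¹)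
              ≤ (∏ p ∈ a.primeFactors ∪ b.primeFactors, (1 + (p:ℝ)⁻¹)) *
                  ∏ p ∈ m.primeFactors, (1 + (p:ℝ)⁻¹) := prod_union_le hone
            _ ≤ (∏ p ∈ a.primeFactors, (1 + (p:ℝ)⁻¹)) *
                  (∏ p ∈ b.primeFactors, (1 + (p:ℝ)⁻¹)) *
                  ∏ p ∈ m.primeFactors, (1 + (p:ℝ)⁻¹) := by
                apply mul_le_mul_of_nonneg_right (prod_union_le hone)
                exact Finset.prod_nonneg (fun p _ => le_trans zero_le_one (hone p))
        have hdiv : (1:ℝ) / (↑a * ↑b) = (a:ℝ)⁻¹ * (b:ℝ)⁻¹ := by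
          rw [one_div, mul_inv]
        rw [hdiv]
        have h0 : (0:ℝ) ≤ (a:ℝ)⁻¹ * (b:ℝ)⁻¹ := by positivity
        calc (a:ℝ)⁻¹ * (b:ℝ)⁻¹ * ∏ p ∈ (a * b * m).primeFactors, (1 + (p:ℝ)⁻¹)
            ≤ (a:ℝ)⁻¹ * (b:ℝ)⁻¹ *
              ((∏ p ∈ a.primeFactors, (1 + (p:ℝ)⁻¹)) *
                (∏ p ∈ b.primeFactors, (1 + (p:ℝ)⁻¹)) *
                ∏ p ∈ m.primeFactors, (1 + (p:ℝ)⁻¹)) :=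
              mul_le_mul_of_nonneg_left hPle h0
          _ = ((a:ℝ)⁻¹ * ∏ p ∈ a.primeFactors, (1 + (p:ℝ)⁻¹)) *
              ((b : ℝ)⁻¹ * (∏ p ∈ b.primeFactors, (1 + (p : ℝ)⁻¹)) *
                ∏ p ∈ m.primeFactors, (1 + (p : ℝ)⁻¹)) := by ring
      · rw [if_neg hc, if_neg hc, mul_zero]
    calc ∑ b ∈ Finset.Icc 1 n,
          (if Nat.gcd (a * e) (b * f) = 1 ∧ a * e ≠ b * f then
            (1 : ℝ) / (a * b) *
              ∏ p ∈ (a * b * ((a * e : ℤ) - (b * f : ℤ)).natAbs).primeFactors,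
                (1 + (p : ℝ)⁻¹)
          else 0)
        ≤ ∑ b ∈ Finset.Icc 1 n,
            ((a:ℝ)⁻¹ * ∏ p ∈ a.primeFactors, (1 + (p:ℝ)⁻¹)) *
            (if Nat.gcd (a * e) (b * f) = 1 ∧ a * e ≠ b * f then
              (b : ℝ)⁻¹ * (∏ p ∈ b.primeFactors, (1 + (p : ℝ)⁻¹)) *
                ∏ p ∈ (((a * e : ℤ) - (b * f : ℤ)).natAbs).primeFactors, (1 + (p : ℝ)⁻¹)
            else 0) := Finset.sum_le_sum hpt
      _ = ((a:ℝ)⁻¹ * ∏ p ∈ a.primeFactors, (1 + (p:ℝ)⁻¹)) *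
          ∑ b ∈ Finset.Icc 1 n,
            (if Nat.gcd (a * e) (b * f) = 1 ∧ a * e ≠ b * f then
              (b : ℝ)⁻¹ * (∏ p ∈ b.primeFactors, (1 + (p : ℝ)⁻¹)) *
                ∏ p ∈ (((a * e : ℤ) - (b * f : ℤ)).natAbs).primeFactors, (1 + (p : ℝ)⁻¹)
            else 0) := by rw [Finset.mul_sum]
      _ ≤ ((a:ℝ)⁻¹ * ∏ p ∈ a.primeFactors, (1 + (p:ℝ)⁻¹)) * (8 * (1 + Real.log x)) :=
          mul_le_mul_of_nonneg_left (inner_bound hx' hen hfn haI) haG0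
  have houter : ∑ a ∈ Finset.Icc 1 n,
      (((a:ℝ)⁻¹ * ∏ p ∈ a.primeFactors, (1 + (p:ℝ)⁻¹)) * (8 * (1 + L)))
      ≤ 4 * (1 + L) * (8 * (1 + L)) := by
    rw [← Finset.sum_mul]
    apply mul_le_mul_of_nonneg_right (outer_bound hx')
    nlinarith
  have hlog2 : (1:ℝ)/2 ≤ L := by
    have h1 : Real.log 2 ≤ L := Real.log_le_log (by norm_num) hx'
    have h2 := Real.log_two_gt_d9
    linarith
  have hfinal : 4 * (1 + L) * (8 * (1 + L)) ≤ 288 * L ^ 2 := by nlinarith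
  calc _ ≤ _ := main
    _ ≤ 4 * (1 + L) * (8 * (1 + L)) := houter
    _ ≤ 288 * L ^ 2 := hfinal
    _ = 288 * (Real.log x) ^ 2 := by rw [hLdef]
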